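/- Fix n ∈ ℕ and β ∈ (1/2, 1), and let Γ be a random vector in {0,1}^n whose coordinates are independent, each equal to 0 with probability β and to 1 with probability 1−β. Let h : {0,1}^n → {0,1} be any function, and let a, Δ ∈ {0,1}^n. For i ∈ ℤ define the level set H_i = {z ∈ {0,1}^n : ‖z ⊕ a ⊕ Δ‖₀ − ‖z ⊕ a‖₀ = i}. Let μ ∈ ℤ, let H' ⊆ H_μ be any subset, and set H = (⋃_{i > μ} H_i) ∪ H'. If P(a ⊕ Γ ∈ H) ≤ P(h(a ⊕ Γ) = 1), then P(h(a ⊕ Δ ⊕ Γ) = 1) ≥ P(a ⊕ Δ ⊕ Γ ∈ H). -/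

import Mathlib

open MeasureTheory ProbabilityTheory
open scoped ENNReal

/-- The Bernoulli flip-noise distribution on `{0,1} = ZMod 2`: it takes the value `0` with
probability `β` and the value `1` with probability `1 − β`. -/
noncomputable def flipNoise (β : ℝ) : Measure (ZMod 2) :=
  ENNReal.ofReal β • Measure.dirac 0 + ENNReal.ofReal (1 - β) • Measure.dirac 1

instance flipNoise_finite (β : ℝ) : IsFiniteMeasure (flipNoise β) := by
  constructor
  simp only [flipNoise, Measure.add_apply, Measure.smul_apply, smul_eq_mul,
    Measure.dirac_apply_of_mem (Set.mem_univ _), mul_one]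
  exact ENNReal.add_lt_top.2 ⟨ENNReal.ofReal_lt_top, ENNReal.ofReal_lt_top⟩

theorem meas_eq_sum' {α : Type*} [Fintype α] [MeasurableSpace α] [MeasurableSingletonClass α]
    (μ : Measure α) (S : Set α) [DecidablePred (· ∈ S)] :
    μ S = ∑ z ∈ Finset.univ.filter (· ∈ S), μ {z} := by
  rw [← measure_biUnion_finset (s := Finset.univ.filter (· ∈ S)) (f := fun z => ({z} : Set α))
    (fun i _ j _ hij => by simp [Set.disjoint_singleton, hij])
    (fun b _ => measurableSet_singleton b)]
  congr 1; ext x; simp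

theorem flipNoise_singleton (β : ℝ) (x : ZMod 2) :
    flipNoise β {x} = ENNReal.ofReal (if x = 0 then β else 1 - β) := by
  have : (1 : ZMod 2) ≠ 0 := by decide
  rcases (by decide : ∀ y : ZMod 2, y = 0 ∨ y = 1) x with rfl | rfl <;>
    simp [flipNoise, Measure.dirac_apply', Set.indicator, this, this.symm]

theorem mass_singleton (n : ℕ) (β : ℝ) (hβ : β ∈ Set.Ioo (1 / 2 : ℝ) 1)
    (z : Fin n → ZMod 2) :
    (Measure.pi fun _ => flipNoise β) {z}
      = ENNReal.ofReal (β ^ n * ((1 - β) / β) ^ hammingNorm z) := by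
  classical
  have hβ0 : (0:ℝ) < β := lt_trans (by norm_num) hβ.1
  have hβ1 : (0:ℝ) < 1 - β := by linarith [hβ.2]
  rw [← Set.univ_pi_singleton, Measure.pi_pi]
  have h1 : ∀ i : Fin n, flipNoise β {z i} = ENNReal.ofReal (if z i ≠ 0 then 1 - β else β) := by
    intro i
    rw [flipNoise_singleton]
    by_cases h : z i = 0 <;> simp [h]
  simp_rw [h1]
  rw [← ENNReal.ofReal_prod_of_nonneg (fun i _ => by positivity)]
  congr 1
  rw [Finset.prod_ite, Finset.prod_const, Finset.prod_const]
  have hk : hammingNorm z ≤ n := by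
    simpa [hammingNorm] using Finset.card_filter_le Finset.univ (fun i => z i ≠ 0)
  have hcard : (Finset.univ.filter fun i : Fin n => ¬ z i ≠ 0).card = n - hammingNorm z := by
    have := Finset.card_filter_add_card_filter_not (s := Finset.univ)
      (p := fun i : Fin n => z i ≠ 0)
    simp only [Finset.card_univ, Fintype.card_fin] at this
    have hham : (Finset.filter (fun i => z i ≠ 0) Finset.univ).card = hammingNorm z := by
      simp [hammingNorm]
    omega
  rw [hcard]
  show (1 - β) ^ hammingNorm z * β ^ (n - hammingNorm z) = _
  set r : ℝ := (1 - β) / β with hr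
  have h' : 1 - β = β * r := by rw [hr]; field_simp
  rw [h', mul_pow, ← pow_sub_mul_pow β hk]
  ring

/-- **Theorem 3 (Positive Probability Lower Bound)**, with the likelihood-ratio level sets
`H_i = {z : ‖z ⊕ a ⊕ Δ‖₀ − ‖z ⊕ a‖₀ = i}` made explicit via Hamming weights: if
`H = (⋃_{i > μ} H_i) ∪ H'` with `H' ⊆ H_μ` satisfies `P(a ⊕ Γ ∈ H) ≤ P(h(a ⊕ Γ) = 1)`,
then `P(h(a ⊕ Δ ⊕ Γ) = 1) ≥ P(a ⊕ Δ ⊕ Γ ∈ H)`. Here `⊕` is coordinatewise XOR,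
i.e. addition in `ZMod 2`, and `‖·‖₀` is the Hamming weight. -/
theorem stmt_14
    (n : ℕ) (β : ℝ) (hβ : β ∈ Set.Ioo (1 / 2 : ℝ) 1)
    (μmeas : Measure (Fin n → ZMod 2))
    (hμmeas : μmeas = Measure.pi (fun _ => flipNoise β))
    (h : (Fin n → ZMod 2) → Bool)
    (a Δ : Fin n → ZMod 2) (m : ℤ)
    (H' : Set (Fin n → ZMod 2))
    (hH' : H' ⊆ {z | (hammingNorm (z + a + Δ) : ℤ) - (hammingNorm (z + a) : ℤ) = m})
    (H : Set (Fin n → ZMod 2))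
    (hH : H = {z | m < (hammingNorm (z + a + Δ) : ℤ) - (hammingNorm (z + a) : ℤ)} ∪ H')
    (hyp : μmeas {γ | a + γ ∈ H} ≤ μmeas {γ | h (a + γ) = true}) :
    μmeas {γ | a + Δ + γ ∈ H} ≤ μmeas {γ | h (a + Δ + γ) = true} := by
  classical
  have hβ0 : (0:ℝ) < β := lt_trans (by norm_num) hβ.1
  have hβ1 : (0:ℝ) < 1 - β := by linarith [hβ.2]
  set r : ℝ := (1 - β) / β with hrdef
  have hr0 : 0 < r := div_pos hβ1 hβ0
  have hr1 : r ≤ 1 := by rw [div_le_one hβ0]; linarith [hβ.1]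
  have h2 : ∀ x : Fin n → ZMod 2, x + x = 0 := fun x => funext fun i =>
    (by decide : ∀ y : ZMod 2, y + y = 0) (x i)
  have hinv : ∀ b x : Fin n → ZMod 2, b + (b + x) = x := by
    intro b x; rw [← add_assoc, h2 b, zero_add]
  -- measures as real sums
  have shift : ∀ (b : Fin n → ZMod 2) (S : Set (Fin n → ZMod 2)),
      μmeas {γ | b + γ ∈ S}
        = ENNReal.ofReal (∑ z ∈ Finset.univ.filter (· ∈ S),
            β ^ n * r ^ hammingNorm (z + b)) := by
    intro b S
    rw [hμmeas, meas_eq_sum']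
    rw [ENNReal.ofReal_sum_of_nonneg (fun z _ => by positivity)]
    refine Finset.sum_equiv (Equiv.addLeft b) ?_ ?_
    · intro γ; simp
    · intro γ hγ
      rw [mass_singleton n β hβ]
      simp only [Equiv.coe_addLeft]
      congr 2
      rw [add_comm (b + γ) b, hinv]
  obtain ⟨B, hBdef⟩ : ∃ B : Set (Fin n → ZMod 2), B = {z | h z = true} := ⟨_, rfl⟩
  have hyp' : μmeas {γ | a + γ ∈ H} ≤ μmeas {γ | a + γ ∈ B} := by
    rw [hBdef]; exact hyp
  rw [shift a H, shift a B] at hyp'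
  suffices hgoal : μmeas {γ | a + Δ + γ ∈ H} ≤ μmeas {γ | a + Δ + γ ∈ B} by
    subst hBdef; exact hgoal
  rw [shift (a + Δ) H, shift (a + Δ) B]
  -- real versions
  have hypR := (ENNReal.ofReal_le_ofReal_iff (by positivity)).mp hyp'
  apply ENNReal.ofReal_le_ofReal
  set c : ℝ := r ^ m with hc
  have hcnn : 0 ≤ c := zpow_nonneg hr0.le m
  -- pointwise bounds
  have hub : ∀ z, z ∈ H →
      β ^ n * r ^ hammingNorm (z + (a + Δ)) ≤ c * (β ^ n * r ^ hammingNorm (z + a)) := by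
    intro z hz
    have hd : m ≤ (hammingNorm (z + a + Δ) : ℤ) - (hammingNorm (z + a) : ℤ) := by
      rw [hH] at hz
      rcases hz with hz | hz
      · exact le_of_lt hz
      · exact (hH' hz).ge
    rw [← add_assoc]
    have key : r ^ hammingNorm (z + a + Δ) ≤ c * r ^ hammingNorm (z + a) := by
      calc r ^ hammingNorm (z + a + Δ) = r ^ ((hammingNorm (z + a + Δ) : ℤ)) :=
            (zpow_natCast r _).symm
        _ ≤ r ^ (m + (hammingNorm (z + a) : ℤ)) :=
            zpow_le_zpow_right_of_le_one₀ hr0 hr1 (by omega)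
        _ = c * r ^ ((hammingNorm (z + a) : ℤ)) := zpow_add₀ (ne_of_gt hr0) _ _
        _ = c * r ^ hammingNorm (z + a) := by rw [zpow_natCast]
    calc β ^ n * r ^ hammingNorm (z + a + Δ)
        ≤ β ^ n * (c * r ^ hammingNorm (z + a)) :=
          mul_le_mul_of_nonneg_left key (by positivity)
      _ = c * (β ^ n * r ^ hammingNorm (z + a)) := by ring
  have hlb : ∀ z, z ∉ H →
      c * (β ^ n * r ^ hammingNorm (z + a)) ≤ β ^ n * r ^ hammingNorm (z + (a + Δ)) := by
    intro z hz
    have hd : (hammingNorm (z + a + Δ) : ℤ) - (hammingNorm (z + a) : ℤ) ≤ m := by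
      rw [hH] at hz
      by_contra hlt
      push_neg at hlt
      exact hz (Or.inl hlt)
    rw [← add_assoc]
    have key : c * r ^ hammingNorm (z + a) ≤ r ^ hammingNorm (z + a + Δ) := by
      calc c * r ^ hammingNorm (z + a) = c * r ^ ((hammingNorm (z + a) : ℤ)) := by
            rw [zpow_natCast]
        _ = r ^ (m + (hammingNorm (z + a) : ℤ)) := (zpow_add₀ (ne_of_gt hr0) _ _).symm
        _ ≤ r ^ ((hammingNorm (z + a + Δ) : ℤ)) :=
            zpow_le_zpow_right_of_le_one₀ hr0 hr1 (by omega)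
        _ = r ^ hammingNorm (z + a + Δ) := zpow_natCast r _
    calc c * (β ^ n * r ^ hammingNorm (z + a))
        = β ^ n * (c * r ^ hammingNorm (z + a)) := by ring
      _ ≤ β ^ n * r ^ hammingNorm (z + a + Δ) :=
          mul_le_mul_of_nonneg_left key (by positivity)
  -- sum splitting
  have hsplit : ∀ (f : (Fin n → ZMod 2) → ℝ) (S T : Set (Fin n → ZMod 2)),
      (∑ z ∈ Finset.univ.filter (· ∈ S), f z)
        = (∑ z ∈ Finset.univ.filter (· ∈ S ∩ T), f z)
          + ∑ z ∈ Finset.univ.filter (· ∈ S \ T), f z := by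
    intro f S T
    rw [← Finset.sum_union (by
      rw [Finset.disjoint_left]
      intro x hx hx'
      simp only [Finset.mem_filter, Set.mem_inter_iff, Set.mem_diff] at hx hx'
      tauto)]
    congr 1
    ext x
    simp only [Finset.mem_filter, Finset.mem_union, Set.mem_inter_iff, Set.mem_diff]
    tauto
  have e1 := hsplit (fun z => β ^ n * r ^ hammingNorm (z + (a + Δ))) H B
  have e2 := hsplit (fun z => β ^ n * r ^ hammingNorm (z + (a + Δ))) B H
  have e3 := hsplit (fun z => β ^ n * r ^ hammingNorm (z + a)) H B
  have e4 := hsplit (fun z => β ^ n * r ^ hammingNorm (z + a)) B H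
  have hswap : (Finset.univ.filter (· ∈ B ∩ H)) = Finset.univ.filter (· ∈ H ∩ B) := by
    ext x
    simp only [Finset.mem_filter, Set.mem_inter_iff]
    tauto
  rw [hswap] at e2 e4
  have b1 : (∑ z ∈ Finset.univ.filter (· ∈ H \ B), β ^ n * r ^ hammingNorm (z + (a + Δ)))
      ≤ c * ∑ z ∈ Finset.univ.filter (· ∈ H \ B), β ^ n * r ^ hammingNorm (z + a) := by
    rw [Finset.mul_sum]
    refine Finset.sum_le_sum fun z hz => ?_
    exact hub z (Finset.mem_filter.mp hz).2.1
  have b2 : (c * ∑ z ∈ Finset.univ.filter (· ∈ B \ H), β ^ n * r ^ hammingNorm (z + a))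
      ≤ ∑ z ∈ Finset.univ.filter (· ∈ B \ H), β ^ n * r ^ hammingNorm (z + (a + Δ)) := by
    rw [Finset.mul_sum]
    refine Finset.sum_le_sum fun z hz => ?_
    exact hlb z (Finset.mem_filter.mp hz).2.2
  have b3 : (∑ z ∈ Finset.univ.filter (· ∈ H \ B), β ^ n * r ^ hammingNorm (z + a))
      ≤ ∑ z ∈ Finset.univ.filter (· ∈ B \ H), β ^ n * r ^ hammingNorm (z + a) := by
    linarith [hypR, e3, e4]
  have b4 := mul_le_mul_of_nonneg_left b3 hcnn
  linarith
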